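/- Fix integers n1, n2 ≥ 3 and θ = (φ, ρ11, ρ12, ρ21, ρ22) ∈ ℝ^5, and set K = max(|ρ11|, |ρ12|, |ρ21|, |ρ22|). For every vector u ∈ ℂ^{2n} with ‖u‖₂ = 1, Q̃_{n1,n2}(θ)·u = λ_min(Q̃_{n1,n2}(θ))·u, and |u_k| ≤ √2/√(n1·n2) for every index k, it holds that |u* Q_{n1,n2}(θ) u − λ_min(Q̃_{n1,n2}(θ))| ≤ 16·K·(n1+n2)/(n1·n2); in particular this difference tends to 0 as n1, n2 → ∞. -/

import Mathlib

open Matrix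

/-- Smallest element of the real spectrum of a real (symmetric) matrix. -/
noncomputable def lamMin {m : Type} [Fintype m] [DecidableEq m] (M : Matrix m m ℝ) : ℝ :=
  sInf (spectrum ℝ M)

/-- Block-Toeplitz block `T_{n1,n2}(x,y,z)`, indexed by pairs `(a,b)` with
`a ∈ Fin n2`, `b ∈ Fin n1`. -/
def Tmat (n1 n2 : ℕ) (x y z : ℝ) :
    Matrix (Fin n2 × Fin n1) (Fin n2 × Fin n1) ℝ := fun p q =>
  if q = p then y
  else if (q.1 = p.1 ∧ (q.2 : ℕ) = (p.2 : ℕ) + 1) ∨ (q.2 = p.2 ∧ (q.1 : ℕ) = (p.1 : ℕ) + 1) then z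
  else if (q.1 = p.1 ∧ (q.2 : ℕ) + 1 = (p.2 : ℕ)) ∨ (q.2 = p.2 ∧ (q.1 : ℕ) + 1 = (p.1 : ℕ)) then x
  else 0

/-- Block-circulant block `C_{n1,n2}(x,y,z)`. -/
def Cmat (n1 n2 : ℕ) (x y z : ℝ) :
    Matrix (Fin n2 × Fin n1) (Fin n2 × Fin n1) ℝ := fun p q =>
  if q = p then y
  else if (q.1 = p.1 ∧ (q.2 : ℕ) = ((p.2 : ℕ) + 1) % n1) ∨
          (q.2 = p.2 ∧ (q.1 : ℕ) = ((p.1 : ℕ) + 1) % n2) then z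
  else if (q.1 = p.1 ∧ ((q.2 : ℕ) + 1) % n1 = (p.2 : ℕ)) ∨
          (q.2 = p.2 ∧ ((q.1 : ℕ) + 1) % n2 = (p.1 : ℕ)) then x
  else 0

/-- The precision matrix `Q_{n1,n2}(θ)`, `θ = (φ, ρ11, ρ12, ρ21, ρ22)`. -/
def Qmat (n1 n2 : ℕ) (φ ρ11 ρ12 ρ21 ρ22 : ℝ) :
    Matrix ((Fin n2 × Fin n1) ⊕ (Fin n2 × Fin n1)) ((Fin n2 × Fin n1) ⊕ (Fin n2 × Fin n1)) ℝ :=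
  Matrix.fromBlocks (Tmat n1 n2 ρ11 1 ρ11) (Tmat n1 n2 ρ21 φ ρ12)
    (Tmat n1 n2 ρ21 φ ρ12)ᵀ (Tmat n1 n2 ρ22 1 ρ22)

/-- The block-circulant (toroidal) approximation `Q̃_{n1,n2}(θ)`. -/
def Qcmat (n1 n2 : ℕ) (φ ρ11 ρ12 ρ21 ρ22 : ℝ) :
    Matrix ((Fin n2 × Fin n1) ⊕ (Fin n2 × Fin n1)) ((Fin n2 × Fin n1) ⊕ (Fin n2 × Fin n1)) ℝ :=
  Matrix.fromBlocks (Cmat n1 n2 ρ11 1 ρ11) (Cmat n1 n2 ρ21 φ ρ12)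
    (Cmat n1 n2 ρ21 φ ρ12)ᵀ (Cmat n1 n2 ρ22 1 ρ22)


lemma mod_cases (m t : ℕ) (ht : t < m) :
    (t + 1) % m = t + 1 ∨ ((t + 1) % m = 0 ∧ t + 1 = m) := by
  rcases Nat.lt_or_ge (t + 1) m with h | h
  · exact Or.inl (Nat.mod_eq_of_lt h)
  · have hm : t + 1 = m := by omega
    exact Or.inr ⟨by rw [hm, Nat.mod_self], hm⟩

lemma entry_bound (n1 n2 : ℕ) (h1 : 3 ≤ n1) (h2 : 3 ≤ n2) (x y z : ℝ) (p q : Fin n2 × Fin n1) :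
    |(Cmat n1 n2 x y z - Tmat n1 n2 x y z) p q| ≤
      (if q.1 = p.1 ∧ (p.2 : ℕ) = n1 - 1 ∧ (q.2 : ℕ) = 0 then |z| else 0)
    + (if q.2 = p.2 ∧ (p.1 : ℕ) = n2 - 1 ∧ (q.1 : ℕ) = 0 then |z| else 0)
    + (if q.1 = p.1 ∧ (p.2 : ℕ) = 0 ∧ (q.2 : ℕ) = n1 - 1 then |x| else 0)
    + (if q.2 = p.2 ∧ (p.1 : ℕ) = 0 ∧ (q.1 : ℕ) = n2 - 1 then |x| else 0) := by
  have hb := p.2.isLt; have hb' := q.2.isLt; have ha := p.1.isLt; have ha' := q.1.isLt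
  rcases eq_or_ne q p with rfl | hqp
  · simp only [Matrix.sub_apply, Cmat, Tmat, if_pos rfl, sub_self, abs_zero]
    split_ifs <;>
      simp only [sub_self, abs_zero, add_zero, zero_add] <;>
      first | exact le_rfl | positivity
  · by_cases hA : q.1 = p.1 <;> by_cases hB : q.2 = p.2
    · exact absurd (Prod.ext hA hB) hqp
    · have H1 := mod_cases n1 _ hb; have H2 := mod_cases n1 _ hb'
      simp only [Matrix.sub_apply, Cmat, Tmat, hA, hB, hqp,
        if_false, and_true, and_false, false_or, or_false, true_and, false_and,
        eq_self_iff_true, if_neg hqp]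
      generalize ((p.2 : ℕ) + 1) % n1 = B1 at H1 ⊢
      generalize ((q.2 : ℕ) + 1) % n1 = B2 at H2 ⊢
      have hBne : (q.2 : ℕ) ≠ (p.2 : ℕ) := fun h => hB (Fin.ext h)
      split_ifs <;>
        first
          | (exfalso; omega)
          | (simp only [sub_self, sub_zero, zero_sub, abs_zero, abs_neg, add_zero, zero_add];
             first | exact le_rfl | simp [abs_nonneg])
    · have H3 := mod_cases n2 _ ha; have H4 := mod_cases n2 _ ha'
      simp only [Matrix.sub_apply, Cmat, Tmat, hA, hB, hqp,
        if_false, and_true, and_false, false_or, or_false, true_and, false_and,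
        eq_self_iff_true, if_neg hqp]
      generalize ((p.1 : ℕ) + 1) % n2 = A1 at H3 ⊢
      generalize ((q.1 : ℕ) + 1) % n2 = A2 at H4 ⊢
      have hAne : (q.1 : ℕ) ≠ (p.1 : ℕ) := fun h => hA (Fin.ext h)
      split_ifs <;>
        first
          | (exfalso; omega)
          | (simp only [sub_self, sub_zero, zero_sub, abs_zero, abs_neg, add_zero, zero_add];
             first | exact le_rfl | simp [abs_nonneg])
    · have hAne : (q.1 : ℕ) ≠ (p.1 : ℕ) := fun h => hA (Fin.ext h)
      have hBne : (q.2 : ℕ) ≠ (p.2 : ℕ) := fun h => hB (Fin.ext h)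
      simp only [Matrix.sub_apply, Cmat, Tmat, hA, hB, hqp,
        if_false, and_true, and_false, false_or, or_false, true_and, false_and,
        false_and, if_neg hqp, or_self, sub_self, abs_zero, add_zero, zero_add]
      exact le_rfl

lemma sum_ind_snd (n1 n2 : ℕ) (r : ℝ) (β γ : ℕ) (hβ : β < n1) (hγ : γ < n1) :
    ∑ p : Fin n2 × Fin n1, ∑ q : Fin n2 × Fin n1,
      (if q.1 = p.1 ∧ (p.2 : ℕ) = β ∧ (q.2 : ℕ) = γ then r else 0) = n2 * r := by
  have h : ∀ p q : Fin n2 × Fin n1,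
      (if q.1 = p.1 ∧ (p.2 : ℕ) = β ∧ (q.2 : ℕ) = γ then r else 0)
      = if (p.2 : ℕ) = β then (if q = (p.1, (⟨γ, hγ⟩ : Fin n1)) then r else 0) else 0 := by
    intro p q
    by_cases h1 : (p.2 : ℕ) = β <;> by_cases h2 : q = (p.1, (⟨γ, hγ⟩ : Fin n1)) <;>
      simp_all [Prod.ext_iff, Fin.ext_iff]
  simp only [h]
  have h2 : ∀ p : Fin n2 × Fin n1,
      (∑ q : Fin n2 × Fin n1, if (p.2 : ℕ) = β then
        (if q = (p.1, (⟨γ, hγ⟩ : Fin n1)) then r else 0) else 0)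
      = if (p.2 : ℕ) = β then r else 0 := by
    intro p
    by_cases h1 : (p.2 : ℕ) = β <;> simp [h1, Finset.sum_ite_eq']
  simp only [h2]
  rw [Fintype.sum_prod_type]
  have h3 : ∀ b : Fin n1, ((b : ℕ) = β) ↔ b = ⟨β, hβ⟩ := by
    intro b; exact ⟨fun h => Fin.ext h, fun h => by rw [h]⟩
  simp only [h3]
  simp [Finset.sum_ite_eq', mul_comm]

lemma sum_ind_fst (n1 n2 : ℕ) (r : ℝ) (β γ : ℕ) (hβ : β < n2) (hγ : γ < n2) :
    ∑ p : Fin n2 × Fin n1, ∑ q : Fin n2 × Fin n1,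
      (if q.2 = p.2 ∧ (p.1 : ℕ) = β ∧ (q.1 : ℕ) = γ then r else 0) = n1 * r := by
  have h : ∀ p q : Fin n2 × Fin n1,
      (if q.2 = p.2 ∧ (p.1 : ℕ) = β ∧ (q.1 : ℕ) = γ then r else 0)
      = if (p.1 : ℕ) = β then (if q = ((⟨γ, hγ⟩ : Fin n2), p.2) then r else 0) else 0 := by
    intro p q
    by_cases h1 : (p.1 : ℕ) = β <;> by_cases h2 : q = ((⟨γ, hγ⟩ : Fin n2), p.2) <;>
      simp_all [Prod.ext_iff, Fin.ext_iff, and_comm]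
  simp only [h]
  have h2 : ∀ p : Fin n2 × Fin n1,
      (∑ q : Fin n2 × Fin n1, if (p.1 : ℕ) = β then
        (if q = ((⟨γ, hγ⟩ : Fin n2), p.2) then r else 0) else 0)
      = if (p.1 : ℕ) = β then r else 0 := by
    intro p
    by_cases h1 : (p.1 : ℕ) = β <;> simp [h1, Finset.sum_ite_eq']
  simp only [h2]
  rw [Fintype.sum_prod_type]
  have h3 : ∀ a : Fin n2, ((a : ℕ) = β) ↔ a = ⟨β, hβ⟩ := by
    intro a; exact ⟨fun h => Fin.ext h, fun h => by rw [h]⟩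
  simp only [h3]
  simp [Finset.sum_ite_eq, Finset.sum_ite_eq', mul_comm]

lemma block_sum (n1 n2 : ℕ) (h1 : 3 ≤ n1) (h2 : 3 ≤ n2) (x y z : ℝ) :
    ∑ p : Fin n2 × Fin n1, ∑ q : Fin n2 × Fin n1,
      |(Cmat n1 n2 x y z - Tmat n1 n2 x y z) p q| ≤ (|x| + |z|) * (n1 + n2) := by
  have step : ∑ p : Fin n2 × Fin n1, ∑ q : Fin n2 × Fin n1,
      |(Cmat n1 n2 x y z - Tmat n1 n2 x y z) p q| ≤
      ∑ p : Fin n2 × Fin n1, ∑ q : Fin n2 × Fin n1,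
      ((if q.1 = p.1 ∧ (p.2 : ℕ) = n1 - 1 ∧ (q.2 : ℕ) = 0 then |z| else 0)
      + (if q.2 = p.2 ∧ (p.1 : ℕ) = n2 - 1 ∧ (q.1 : ℕ) = 0 then |z| else 0)
      + (if q.1 = p.1 ∧ (p.2 : ℕ) = 0 ∧ (q.2 : ℕ) = n1 - 1 then |x| else 0)
      + (if q.2 = p.2 ∧ (p.1 : ℕ) = 0 ∧ (q.1 : ℕ) = n2 - 1 then |x| else 0)) :=
    Finset.sum_le_sum fun p _ => Finset.sum_le_sum fun q _ =>
      entry_bound n1 n2 h1 h2 x y z p q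
  refine le_trans step (le_of_eq ?_)
  simp only [Finset.sum_add_distrib]
  rw [sum_ind_snd n1 n2 |z| (n1 - 1) 0 (by omega) (by omega),
    sum_ind_fst n1 n2 |z| (n2 - 1) 0 (by omega) (by omega),
    sum_ind_snd n1 n2 |x| 0 (n1 - 1) (by omega) (by omega),
    sum_ind_fst n1 n2 |x| 0 (n2 - 1) (by omega) (by omega)]
  ring

lemma quad_abs_le {ι : Type} [Fintype ι] (M : Matrix ι ι ℝ) (u : ι → ℂ) (c : ℝ) (hc : 0 ≤ c)
    (hu : ∀ k, ‖u k‖ ≤ c) :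
    ‖star u ⬝ᵥ ((M.map (fun t : ℝ => (t : ℂ))) *ᵥ u)‖ ≤
      c ^ 2 * ∑ k, ∑ l, |M k l| := by
  have habs : ∀ k, ‖star (u k) * ∑ l, (M k l : ℂ) * u l‖ ≤
      c * ((∑ l, |M k l|) * c) := by
    intro k
    rw [norm_mul]
    have h1 : ‖star (u k)‖ ≤ c := by
      rw [Complex.star_def, Complex.norm_conj]; exact hu k
    have h2 : ‖∑ l, (M k l : ℂ) * u l‖ ≤ (∑ l, |M k l|) * c := by
      refine le_trans (norm_sum_le _ _) ?_
      rw [Finset.sum_mul]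
      refine Finset.sum_le_sum fun l _ => ?_
      rw [norm_mul, Complex.norm_real, Real.norm_eq_abs]
      exact mul_le_mul_of_nonneg_left (hu l) (abs_nonneg _)
    exact mul_le_mul h1 h2 (norm_nonneg _) hc
  calc ‖star u ⬝ᵥ ((M.map (fun t : ℝ => (t : ℂ))) *ᵥ u)‖
      = ‖∑ k, star (u k) * ∑ l, (M k l : ℂ) * u l‖ := by
        simp [dotProduct, Matrix.mulVec, Matrix.map_apply, Pi.star_apply]
    _ ≤ ∑ k, ‖star (u k) * ∑ l, (M k l : ℂ) * u l‖ :=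
        norm_sum_le _ _
    _ ≤ ∑ k, c * ((∑ l, |M k l|) * c) := Finset.sum_le_sum fun k _ => habs k
    _ = c ^ 2 * ∑ k, ∑ l, |M k l| := by
        rw [← Finset.mul_sum, ← Finset.sum_mul]; ring

/-- For a unit minimal eigenvector `u` of `Q̃_{n1,n2}(θ)` with uniformly small
entries, the quadratic form `u* Q u` differs from `λ_min(Q̃)` by at most
`16·K·(n1+n2)/(n1·n2)`. -/
theorem quadratic_form_close_to_min_eigenvalue (n1 n2 : ℕ) (h1 : 3 ≤ n1) (h2 : 3 ≤ n2)
    (φ ρ11 ρ12 ρ21 ρ22 : ℝ) (K : ℝ) (hK : K = max |ρ11| (max |ρ12| (max |ρ21| |ρ22|)))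
    (u : (Fin n2 × Fin n1) ⊕ (Fin n2 × Fin n1) → ℂ)
    (hnorm : ∑ k, ‖u k‖ ^ 2 = 1)
    (heig : ((Qcmat n1 n2 φ ρ11 ρ12 ρ21 ρ22).map (fun t : ℝ => (t : ℂ))) *ᵥ u =
      (lamMin (Qcmat n1 n2 φ ρ11 ρ12 ρ21 ρ22) : ℂ) • u)
    (hu : ∀ k, ‖u k‖ ≤ Real.sqrt 2 / Real.sqrt (n1 * n2)) :
    ‖star u ⬝ᵥ
        (((Qmat n1 n2 φ ρ11 ρ12 ρ21 ρ22).map (fun t : ℝ => (t : ℂ))) *ᵥ u)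
        - (lamMin (Qcmat n1 n2 φ ρ11 ρ12 ρ21 ρ22) : ℂ)‖
      ≤ 16 * K * (n1 + n2) / (n1 * n2) := by
  set L : ℝ := lamMin (Qcmat n1 n2 φ ρ11 ρ12 ρ21 ρ22) with hL
  set Q := Qmat n1 n2 φ ρ11 ρ12 ρ21 ρ22 with hQ
  set Qc := Qcmat n1 n2 φ ρ11 ρ12 ρ21 ρ22 with hQc
  have hdot1 : star u ⬝ᵥ u = (1 : ℂ) := by
    have hk : ∀ k, star (u k) * u k = ((‖u k‖ ^ 2 : ℝ) : ℂ) := by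
      intro k
      rw [Complex.star_def, mul_comm, Complex.mul_conj, Complex.sq_norm]
    calc star u ⬝ᵥ u = ∑ k, star (u k) * u k := rfl
      _ = ∑ k, ((‖u k‖ ^ 2 : ℝ) : ℂ) := Finset.sum_congr rfl fun k _ => hk k
      _ = ((∑ k, ‖u k‖ ^ 2 : ℝ) : ℂ) := by push_cast; rfl
      _ = 1 := by rw [hnorm, Complex.ofReal_one]
  have hquad0 : star u ⬝ᵥ ((Qc.map (fun t : ℝ => (t : ℂ))) *ᵥ u) = (L : ℂ) := by
    rw [heig, dotProduct_smul, hdot1, smul_eq_mul, mul_one]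
  have hsub : star u ⬝ᵥ ((Q.map (fun t : ℝ => (t : ℂ))) *ᵥ u) - (L : ℂ)
      = star u ⬝ᵥ (((Q - Qc).map (fun t : ℝ => (t : ℂ))) *ᵥ u) := by
    rw [Matrix.map_sub _ (fun a b => by push_cast; ring), Matrix.sub_mulVec, dotProduct_sub,
      hquad0]
  have h11 : |ρ11| ≤ K := by rw [hK]; simp [le_max_iff]
  have h12 : |ρ12| ≤ K := by rw [hK]; simp [le_max_iff]
  have h21 : |ρ21| ≤ K := by rw [hK]; simp [le_max_iff]
  have h22 : |ρ22| ≤ K := by rw [hK]; simp [le_max_iff]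
  have hK0 : 0 ≤ K := le_trans (abs_nonneg ρ11) h11
  have hn12 : (0 : ℝ) < (n1 : ℝ) * n2 := by
    have : (0:ℝ) < (n1:ℝ) := by exact_mod_cast (by omega : 0 < n1)
    have : (0:ℝ) < (n2:ℝ) := by exact_mod_cast (by omega : 0 < n2)
    positivity
  have flip : ∀ x y z : ℝ, ∑ p : Fin n2 × Fin n1, ∑ q : Fin n2 × Fin n1,
      |Tmat n1 n2 x y z p q - Cmat n1 n2 x y z p q| ≤ (|x| + |z|) * (n1 + n2) := by
    intro x y z
    refine le_trans (le_of_eq ?_) (block_sum n1 n2 h1 h2 x y z)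
    exact Finset.sum_congr rfl fun p _ => Finset.sum_congr rfl fun q _ => by
      rw [Matrix.sub_apply, abs_sub_comm]
  have flipT : ∑ p : Fin n2 × Fin n1, ∑ q : Fin n2 × Fin n1,
      |Tmat n1 n2 ρ21 φ ρ12 q p - Cmat n1 n2 ρ21 φ ρ12 q p|
      ≤ (|ρ21| + |ρ12|) * (n1 + n2) := by
    rw [Finset.sum_comm]; exact flip ρ21 φ ρ12
  have hS : ∑ k, ∑ l, |(Q - Qc) k l| ≤ 8 * K * ((n1 : ℝ) + n2) := by
    rw [Fintype.sum_sum_type]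
    simp only [Fintype.sum_sum_type, Finset.sum_add_distrib]
    simp only [hQ, hQc, Matrix.sub_apply, Qmat, Qcmat, Matrix.fromBlocks_apply₁₁,
      Matrix.fromBlocks_apply₁₂, Matrix.fromBlocks_apply₂₁, Matrix.fromBlocks_apply₂₂,
      Matrix.transpose_apply]
    have hsum := add_le_add (add_le_add (add_le_add (flip ρ11 1 ρ11) (flip ρ21 φ ρ12))
      flipT) (flip ρ22 1 ρ22)
    refine le_trans ?_ (le_trans hsum ?_)
    · apply le_of_eq; ring_nf
    · have hn : (0:ℝ) ≤ (n1:ℝ) + n2 := by positivity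
      nlinarith [mul_le_mul_of_nonneg_right h11 hn, mul_le_mul_of_nonneg_right h12 hn,
        mul_le_mul_of_nonneg_right h21 hn, mul_le_mul_of_nonneg_right h22 hn]
  rw [hsub]
  have hc : (0:ℝ) ≤ Real.sqrt 2 / Real.sqrt ((n1:ℝ) * n2) := by positivity
  refine le_trans (quad_abs_le (Q - Qc) u _ hc hu) ?_
  have hc2 : (Real.sqrt 2 / Real.sqrt ((n1:ℝ) * n2)) ^ 2 = 2 / ((n1:ℝ) * n2) := by
    rw [div_pow, Real.sq_sqrt (by norm_num), Real.sq_sqrt (le_of_lt hn12)]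
  calc (Real.sqrt 2 / Real.sqrt ((n1:ℝ) * n2)) ^ 2 * ∑ k, ∑ l, |(Q - Qc) k l|
      ≤ (Real.sqrt 2 / Real.sqrt ((n1:ℝ) * n2)) ^ 2 * (8 * K * ((n1 : ℝ) + n2)) :=
        mul_le_mul_of_nonneg_left hS (by positivity)
    _ = 16 * K * ((n1:ℝ) + n2) / ((n1:ℝ) * n2) := by
        rw [hc2]; field_simp; ring
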